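/- Let p ∈ (0,1], and for θ ∈ [−π/2, π/2] set φ⁺(θ) = φ_p(θ) and φ⁻(θ) = −φ_p(−θ). Then for all θ ∈ [−π/2, π/2]: φ⁺(θ) + θ ∈ [0, 3π/2), φ⁺(θ) − θ ∈ [0, 3π/2), φ⁻(θ) + θ ∈ (−3π/2, 0], and φ⁻(θ) − θ ∈ (−3π/2, 0]. Moreover, the functions θ ↦ φ⁺(θ) − θ and θ ↦ φ⁻(θ) − θ are strictly decreasing on [−π/2, π/2], and the functions θ ↦ φ⁺(θ) + θ and θ ↦ φ⁻(θ) + θ are strictly increasing on [−π/2, π/2]. -/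

import Mathlib

open Real Filter Topology

noncomputable def Gf (p θ x : ℝ) : ℝ := p * (Real.cos x - Real.cos θ) + (x - θ) * Real.sin x

lemma Gpos {p θ x : ℝ} (hp0 : 0 < p) (hp1 : p ≤ 1) (hθx : |θ| < x) (hx2 : x ≤ π / 2) :
    0 < Gf p θ x := by
  obtain ⟨hθx2, hθx1⟩ := abs_lt.mp hθx
  have hx0 : 0 < x := lt_of_le_of_lt (abs_nonneg θ) hθx
  have hu : 0 < x - θ := by linarith
  have hv : 0 < x + θ := by linarith
  have hsu : Real.sin ((x - θ)/2) < (x - θ)/2 := Real.sin_lt (by linarith)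
  have hsv0 : 0 < Real.sin ((x + θ)/2) :=
    Real.sin_pos_of_pos_of_lt_pi (by linarith) (by nlinarith [Real.pi_pos])
  have hsu0 : 0 < Real.sin ((x - θ)/2) :=
    Real.sin_pos_of_pos_of_lt_pi (by linarith) (by nlinarith [Real.pi_pos, Real.pi_le_four])
  have hsvx : Real.sin ((x + θ)/2) ≤ Real.sin x := by
    apply (Real.strictMonoOn_sin.monotoneOn)
      (Set.mem_Icc.2 ⟨by linarith, by linarith⟩) (Set.mem_Icc.2 ⟨by linarith, hx2⟩)
    linarith
  have hsx : 0 < Real.sin x := Real.sin_pos_of_pos_of_lt_pi hx0 (by linarith [Real.pi_gt_three])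
  unfold Gf
  rw [Real.cos_sub_cos]
  have h1 : p * Real.sin ((x + θ)/2) ≤ Real.sin ((x + θ)/2) := by nlinarith
  nlinarith [mul_lt_mul_of_pos_left hsu (mul_pos hp0 hsv0), mul_le_mul_of_nonneg_right h1 (le_of_lt hsu0)]

set_option maxHeartbeats 1600000 in
lemma DerivNeg {p θ x : ℝ} (hp0 : 0 < p) (hp1 : p ≤ 1)
    (hθx : |θ| < x) (hxπ : x < π) (hG : Gf p θ x ≤ 0) :
    (2 - p) * Real.sin x - p * Real.sin θ + (x - θ) * Real.cos x < 0 := by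
  obtain ⟨hθ2, hθ1⟩ := abs_lt.mp hθx
  have hx0 : 0 < x := lt_of_le_of_lt (abs_nonneg θ) hθx
  rcases le_or_gt x (π/2) with hx2 | hx2
  · exact absurd hG (not_le.2 (Gpos hp0 hp1 hθx hx2))
  have hs : 0 < Real.sin x := Real.sin_pos_of_pos_of_lt_pi hx0 hxπ
  have hc : Real.cos x < 0 := Real.cos_neg_of_pi_div_two_lt_of_lt hx2 (by linarith [Real.pi_pos])
  have hCc : Real.cos x < Real.cos θ := by
    rw [← Real.cos_abs θ]
    exact Real.cos_lt_cos_of_nonneg_of_le_pi (abs_nonneg θ) (le_of_lt hxπ) hθx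
  have hA : (x - θ) * Real.sin x ≤ p * (Real.cos θ - Real.cos x) := by
    unfold Gf at hG; linarith
  have hA1 : (x - θ) * Real.sin x ≤ Real.cos θ - Real.cos x := by nlinarith
  by_contra hD
  push_neg at hD
  have hB' : p * (Real.sin x + Real.sin θ) ≤ 2 * Real.sin x + (x - θ) * Real.cos x := by linarith
  rcases lt_or_ge (Real.sin x + Real.sin θ) 0 with hsS | hsS
  · -- case II : sin x + sin θ < 0, forces x - θ > π
    have hS0 : Real.sin θ < 0 := by linarith
    have hθ0 : θ < 0 := by
      by_contra h; push_neg at h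
      exact absurd (Real.sin_nonneg_of_nonneg_of_le_pi h (by linarith)) (not_le.2 hS0)
    have h1 : Real.sin (π - x) < Real.sin (-θ) := by
      rw [Real.sin_pi_sub, Real.sin_neg]; linarith
    have h2 : π - x < -θ := by
      by_contra h; push_neg at h
      have := Real.strictMonoOn_sin.monotoneOn (a := -θ) (b := π - x)
        (Set.mem_Icc.2 ⟨by linarith, by linarith⟩)
        (Set.mem_Icc.2 ⟨by linarith, by linarith⟩) h
      linarith
    have hu : π < x - θ := by linarith
    have hcc : Real.cos (-θ) < Real.cos (π - x) :=
      Real.cos_lt_cos_of_nonneg_of_le_pi (by linarith) (by linarith) h2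
    rw [Real.cos_pi_sub, Real.cos_neg] at hcc
    -- hcc : cos θ < -cos x
    have h3 : (x - θ) * (-Real.cos x) ≤ Real.sin x - Real.sin θ := by nlinarith
    have hpy : Real.sin x ^ 2 + Real.cos x ^ 2 = 1 := Real.sin_sq_add_cos_sq x
    have hc2 : π * Real.sin x < 2 * (-Real.cos x) := by nlinarith
    have hc3 : (-Real.cos x) ^ 2 * (4 + π ^ 2) > π ^ 2 := by
      nlinarith [Real.pi_pos, mul_pos Real.pi_pos hs]
    have hcle : -Real.cos x ≤ 1 := by nlinarith [Real.neg_one_le_cos x]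
    have hcpos : 0 < -Real.cos x := neg_pos.2 hc
    have hc4 : (-Real.cos x) ^ 2 ≤ -Real.cos x := by nlinarith
    have h5 : π * (4 + π ^ 2) * ((-Real.cos x) ^ 2) ≤ π * (4 + π ^ 2) * (-Real.cos x) :=
      mul_le_mul_of_nonneg_left hc4 (by positivity)
    have h6 : π * π ^ 2 < π * ((-Real.cos x) ^ 2 * (4 + π ^ 2)) :=
      (mul_lt_mul_iff_right₀ Real.pi_pos).2 hc3
    have h7 : π ^ 3 > 2 * (4 + π ^ 2) := by
      nlinarith [Real.pi_gt_three, Real.pi_gt_d6]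
    have hπc : 2 < π * (-Real.cos x) := by
      have h8 : (4 + π ^ 2) * (π * (-Real.cos x)) > (4 + π ^ 2) * 2 := by nlinarith
      have h9 : (0:ℝ) < 4 + π ^ 2 := by positivity
      exact lt_of_mul_lt_mul_left (by linarith) (le_of_lt h9)
    nlinarith [Real.sin_le_one x, Real.neg_one_le_sin θ, mul_pos (sub_pos.2 hu) hcpos]
  · -- case I : sin x + sin θ ≥ 0
    set a := (x - θ) / 2 with hadef
    set w := (x + θ) / 2 with hwdef
    have hxw : x = a + w := by rw [hadef, hwdef]; ring
    have hθw : θ = w - a := by rw [hadef, hwdef]; ring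
    have ha0 : 0 < a := by rw [hadef]; linarith
    have hw0 : 0 < w := by rw [hwdef]; linarith
    have hwπ : w < π := by rw [hwdef]; linarith
    have hsw : 0 < Real.sin w := Real.sin_pos_of_pos_of_lt_pi hw0 hwπ
    have haπ : a < π := by rw [hadef]; nlinarith [Real.pi_gt_three]
    have hsa : 0 < Real.sin a := Real.sin_pos_of_pos_of_lt_pi ha0 haπ
    have hsx : Real.sin x = Real.sin a * Real.cos w + Real.cos a * Real.sin w := by
      rw [hxw, Real.sin_add]
    have hsθ : Real.sin θ = Real.sin w * Real.cos a - Real.cos w * Real.sin a := by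
      rw [hθw, Real.sin_sub]
    have hcx : Real.cos x = Real.cos a * Real.cos w - Real.sin a * Real.sin w := by
      rw [hxw, Real.cos_add]
    have hcθ : Real.cos θ = Real.cos w * Real.cos a + Real.sin w * Real.sin a := by
      rw [hθw, Real.cos_sub]
    have hca : 0 ≤ Real.cos a := by
      rw [hsx, hsθ] at hsS; nlinarith
    have hsalt : Real.sin a < a := Real.sin_lt ha0
    have hu2 : x - θ = 2 * a := by rw [hadef]; ring
    have h1 : a * Real.sin a * Real.cos w ≤ (Real.sin a - a * Real.cos a) * Real.sin w := by
      rw [hsx, hcθ, hcx, hu2] at hA1; nlinarith [hA1]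
    have key : Real.sin a ^ 2 * Real.cos w < (a - Real.sin a * Real.cos a) * Real.sin w := by
      have hpos : 0 < a - Real.sin a * Real.cos a := by
        nlinarith [Real.cos_le_one a]
      rcases le_or_gt (Real.cos w) 0 with hcw | hcw
      · nlinarith [mul_pos hpos hsw]
      · have h2 : Real.sin a * (Real.sin a - a * Real.cos a) * Real.sin w
            < a * (a - Real.sin a * Real.cos a) * Real.sin w := by
          nlinarith [mul_pos (mul_pos (sub_pos.2 hsalt) (show 0 < a + Real.sin a by linarith)) hsw]
        nlinarith [mul_le_mul_of_nonneg_left h1 (le_of_lt hsa)]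
    have hA2 : (x - θ) * Real.sin x * (Real.sin x + Real.sin θ)
        ≤ (2 * Real.sin x + (x - θ) * Real.cos x) * (Real.cos θ - Real.cos x) := by
      calc (x - θ) * Real.sin x * (Real.sin x + Real.sin θ)
          ≤ p * (Real.cos θ - Real.cos x) * (Real.sin x + Real.sin θ) :=
            mul_le_mul_of_nonneg_right hA hsS
        _ = (Real.cos θ - Real.cos x) * (p * (Real.sin x + Real.sin θ)) := by ring
        _ ≤ (Real.cos θ - Real.cos x) * (2 * Real.sin x + (x - θ) * Real.cos x) :=
            mul_le_mul_of_nonneg_left hB' (by linarith)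
        _ = (2 * Real.sin x + (x - θ) * Real.cos x) * (Real.cos θ - Real.cos x) := by ring
    have hid : (x - θ) * Real.sin x * (Real.sin x + Real.sin θ)
        - (2 * Real.sin x + (x - θ) * Real.cos x) * (Real.cos θ - Real.cos x)
        = 4 * Real.sin w * ((a - Real.sin a * Real.cos a) * Real.sin w
            - Real.sin a ^ 2 * Real.cos w) := by
      rw [hsx, hsθ, hcx, hcθ, hu2]
      linear_combination (4 * a * Real.sin w ^ 2) * (Real.sin_sq_add_cos_sq a)
    nlinarith [mul_pos hsw (sub_pos.2 key)]

lemma contAux {f f' : ℝ → ℝ} {a b : ℝ} (hab : a < b)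
    (hder : ∀ t ∈ Set.Icc a b, HasDerivAt f (f' t) t)
    (hneg : ∀ t ∈ Set.Icc a b, f t ≤ 0 → f' t < 0)
    (hfa : f a ≤ 0) : f b < 0 := by
  by_contra hfb
  push_neg at hfb
  have hcont : ContinuousOn f (Set.Icc a b) := fun t ht =>
    (hder t ht).continuousAt.continuousWithinAt
  have haI : a ∈ Set.Icc a b := Set.left_mem_Icc.2 hab.le
  obtain ⟨m, hm, hmin⟩ := (isCompact_Icc).exists_isMinOn ⟨a, haI⟩ hcont
  rw [isMinOn_iff] at hmin
  have hex : ∃ m', m' ∈ Set.Icc a b ∧ m' < b ∧ (∀ t ∈ Set.Icc a b, f m' ≤ f t) ∧ f m' ≤ 0 := by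
    rcases eq_or_lt_of_le hm.2 with h | h
    · have h0 : f b ≤ f a := by rw [← h]; exact hmin a haI
      have hfb0 : f b = 0 := le_antisymm (by linarith) hfb
      have hfa0 : f a = 0 := le_antisymm hfa (by linarith)
      refine ⟨a, haI, hab, fun t ht => ?_, hfa⟩
      rw [hfa0, ← hfb0, ← h]
      exact hmin t ht
    · exact ⟨m, hm, h, hmin, le_trans (hmin a haI) hfa⟩
  obtain ⟨m', hm', hm'b, hmin', hfm'⟩ := hex
  have hd : f' m' < 0 := hneg m' hm' hfm'
  have hslope := hasDerivAt_iff_tendsto_slope.1 (hder m' hm')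
  have h1 : ∀ᶠ t in 𝓝[>] m', slope f m' t < 0 := by
    have h1' : ∀ᶠ t in 𝓝[≠] m', slope f m' t < 0 :=
      hslope.eventually (Filter.Tendsto.eventually_lt_const hd tendsto_id)
    exact h1'.filter_mono (nhdsWithin_mono _ (fun z hz => ne_of_gt hz))
  have h2 : ∀ᶠ t in 𝓝[>] m', t < b := by
    have : Set.Ioo m' b ∈ 𝓝[>] m' := Ioo_mem_nhdsGT_of_mem ⟨le_refl m', hm'b⟩
    exact Filter.eventually_of_mem this (fun z hz => hz.2)
  obtain ⟨t, ⟨hts, htb⟩, htm⟩ := ((h1.and h2).and eventually_mem_nhdsWithin).exists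
  have htm' : m' < t := htm
  have hft : f t < f m' := by
    rw [slope_def_field, div_lt_iff₀ (sub_pos.2 htm')] at hts
    nlinarith [hts]
  exact absurd (hmin' t ⟨le_trans hm'.1 htm'.le, htb.le⟩) (not_le.2 hft)
-- appended part: vMono, contG, key claims, main theorem

lemma vMono {p u v v' : ℝ} (hp0 : 0 < p) (hu0 : 0 < u) (huπ : u < 2*π) (hv0 : 0 < v)
    (hvv : v < v') (hv' : v' < 2*π)
    (h0 : Gf p ((v - u)/2) ((v + u)/2) = 0) : Gf p ((v' - u)/2) ((v' + u)/2) < 0 := by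
  have hπ := Real.pi_pos
  have hsa : 0 < Real.sin (u/2) :=
    Real.sin_pos_of_pos_of_lt_pi (by linarith) (by linarith)
  have hsw : 0 < Real.sin (v/2) :=
    Real.sin_pos_of_pos_of_lt_pi (by linarith) (by linarith)
  have hsw' : 0 < Real.sin (v'/2) :=
    Real.sin_pos_of_pos_of_lt_pi (by linarith) (by linarith)
  have hsd : 0 < Real.sin (v'/2 - v/2) :=
    Real.sin_pos_of_pos_of_lt_pi (by linarith) (by linarith)
  rw [Real.sin_sub] at hsd
  have ea : ((v + u)/2 + (v - u)/2)/2 = v/2 := by ring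
  have eb : ((v + u)/2 - (v - u)/2)/2 = u/2 := by ring
  have ea' : ((v' + u)/2 + (v' - u)/2)/2 = v'/2 := by ring
  have eb' : ((v' + u)/2 - (v' - u)/2)/2 = u/2 := by ring
  have ex : (v + u)/2 = u/2 + v/2 := by ring
  have ex' : (v' + u)/2 = u/2 + v'/2 := by ring
  unfold Gf at h0 ⊢
  rw [Real.cos_sub_cos, ea, eb, show (v + u)/2 - (v - u)/2 = u by ring,
    ex, Real.sin_add] at h0
  rw [Real.cos_sub_cos, ea', eb', show (v' + u)/2 - (v' - u)/2 = u by ring,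
    ex', Real.sin_add] at *
  nlinarith [mul_pos (mul_pos hu0 hsa) hsd, mul_pos hsw hsw',
    mul_le_mul_of_nonneg_right (le_of_eq h0) (le_of_lt hsw')]

lemma contG {p v t₁ t₂ : ℝ} (hp0 : 0 < p) (hp1 : p ≤ 1) (ht1 : 0 < t₁) (h12 : t₁ < t₂)
    (hv : 0 < v) (h2π : t₂ + v < 2 * π)
    (h0 : Gf p ((v - t₁)/2) ((v + t₁)/2) ≤ 0) : Gf p ((v - t₂)/2) ((v + t₂)/2) < 0 := by
  set f : ℝ → ℝ := fun t => p * (Real.cos ((v + t)/2) - Real.cos ((v - t)/2))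
      + t * Real.sin ((v + t)/2) with hfdef
  have hfG : ∀ t : ℝ, Gf p ((v - t)/2) ((v + t)/2) = f t := by
    intro t
    unfold Gf
    rw [hfdef]
    ring_nf
  set f' : ℝ → ℝ := fun t => (1/2) * ((2 - p) * Real.sin ((v + t)/2)
      - p * Real.sin ((v - t)/2) + t * Real.cos ((v + t)/2)) with hf'def
  have hder : ∀ t : ℝ, HasDerivAt f (f' t) t := by
    intro t
    have h1 : HasDerivAt (fun s : ℝ => (v + s)/2) (1/2) t := by
      simpa using ((hasDerivAt_id t).const_add v).div_const 2
    have h2 : HasDerivAt (fun s : ℝ => (v - s)/2) (-1/2) t := by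
      simpa using ((hasDerivAt_id t).const_sub v).div_const 2
    have hc1 : HasDerivAt (fun s : ℝ => Real.cos ((v + s)/2))
        (-Real.sin ((v + t)/2) * (1/2)) t := (Real.hasDerivAt_cos ((v + t)/2)).comp (h₂ := Real.cos) t h1
    have hc2 : HasDerivAt (fun s : ℝ => Real.cos ((v - s)/2))
        (-Real.sin ((v - t)/2) * (-1/2)) t := (Real.hasDerivAt_cos ((v - t)/2)).comp (h₂ := Real.cos) t h2
    have hs1 : HasDerivAt (fun s : ℝ => Real.sin ((v + s)/2))
        (Real.cos ((v + t)/2) * (1/2)) t := (Real.hasDerivAt_sin ((v + t)/2)).comp (h₂ := Real.sin) t h1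
    have hmul : HasDerivAt (fun s : ℝ => s * Real.sin ((v + s)/2))
        (1 * Real.sin ((v + t)/2) + t * (Real.cos ((v + t)/2) * (1/2))) t :=
      (hasDerivAt_id t).mul hs1
    have htot := ((hc1.sub hc2).const_mul p).add hmul
    have : f' t = p * (-Real.sin ((v + t)/2) * (1/2) - -Real.sin ((v - t)/2) * (-1/2))
        + (1 * Real.sin ((v + t)/2) + t * (Real.cos ((v + t)/2) * (1/2))) := by
      rw [hf'def]; ring
    rw [this]
    exact htot
  have hneg : ∀ t ∈ Set.Icc t₁ t₂, f t ≤ 0 → f' t < 0 := by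
    intro t ht hft
    have ht0 : 0 < t := lt_of_lt_of_le ht1 ht.1
    have hθx : |(v - t)/2| < (v + t)/2 := abs_lt.2 ⟨by linarith, by linarith⟩
    have hxπ : (v + t)/2 < π := by linarith [ht.2]
    have hG' : Gf p ((v - t)/2) ((v + t)/2) ≤ 0 := by rw [hfG]; exact hft
    have hD := DerivNeg hp0 hp1 hθx hxπ hG'
    rw [hf'def]
    have e1 : (v + t)/2 - (v - t)/2 = t := by ring
    rw [e1] at hD
    linarith
  rw [hfG] at h0 ⊢
  exact contAux h12 (fun t _ => hder t) hneg h0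

lemma keyA {p : ℝ} {Φ : ℝ → ℝ} (hp0 : 0 < p) (hp1 : p ≤ 1)
    (hΦ : ∀ θ ∈ Set.Icc (-(π / 2)) (π / 2),
      Φ θ ∈ Set.Ioo |θ| π ∧ p * (Real.cos (Φ θ) - Real.cos θ) + (Φ θ - θ) * Real.sin (Φ θ) = 0)
    {θ₁ θ₂ : ℝ} (h1 : θ₁ ∈ Set.Icc (-(π / 2)) (π / 2)) (h2 : θ₂ ∈ Set.Icc (-(π / 2)) (π / 2))
    (h12 : θ₁ < θ₂) :
    Φ θ₂ - θ₂ < Φ θ₁ - θ₁ ∧ Φ θ₁ + θ₁ < Φ θ₂ + θ₂ := by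
  have hπ := Real.pi_pos
  obtain ⟨⟨hx1a, hx1b⟩, hG1⟩ := hΦ θ₁ h1
  obtain ⟨⟨hx2a, hx2b⟩, hG2⟩ := hΦ θ₂ h2
  obtain ⟨h1l, h1r⟩ := h1
  obtain ⟨h2l, h2r⟩ := h2
  obtain ⟨habs1a, habs1b⟩ := abs_lt.1 hx1a
  obtain ⟨habs2a, habs2b⟩ := abs_lt.1 hx2a
  have hG1' : Gf p θ₁ (Φ θ₁) = 0 := hG1
  have hG2' : Gf p θ₂ (Φ θ₂) = 0 := hG2
  set u₁ := Φ θ₁ - θ₁ with hu₁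
  set u₂ := Φ θ₂ - θ₂ with hu₂
  set v₁ := Φ θ₁ + θ₁ with hv₁
  set v₂ := Φ θ₂ + θ₂ with hv₂
  have hu₁0 : 0 < u₁ := by rw [hu₁]; linarith
  have hu₂0 : 0 < u₂ := by rw [hu₂]; linarith
  have hv₁0 : 0 < v₁ := by rw [hv₁]; linarith
  have hv₂0 : 0 < v₂ := by rw [hv₂]; linarith
  have hu₁2π : u₁ < 2*π := by rw [hu₁]; linarith
  have hu₂2π : u₂ < 2*π := by rw [hu₂]; linarith
  have hv₁2π : v₁ < 2*π := by rw [hv₁]; linarith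
  have hv₂2π : v₂ < 2*π := by rw [hv₂]; linarith
  have e1θ : (v₁ - u₁)/2 = θ₁ := by rw [hv₁, hu₁]; ring
  have e1x : (v₁ + u₁)/2 = Φ θ₁ := by rw [hv₁, hu₁]; ring
  have e2θ : (v₂ - u₂)/2 = θ₂ := by rw [hv₂, hu₂]; ring
  have e2x : (v₂ + u₂)/2 = Φ θ₂ := by rw [hv₂, hu₂]; ring
  have hsum1 : u₁ + v₁ < 2*π := by rw [hu₁, hv₁]; linarith
  have hsum2 : u₂ + v₂ < 2*π := by rw [hu₂, hv₂]; linarith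
  constructor
  · -- claim: u₂ < u₁
    by_contra hcon
    push_neg at hcon
    have hvv : v₁ < v₂ := by rw [hv₁, hv₂]; rw [hu₁, hu₂] at hcon; linarith
    have hE : Gf p ((v₂ - u₁)/2) ((v₂ + u₁)/2) < 0 := by
      apply vMono hp0 hu₁0 hu₁2π hv₁0 hvv hv₂2π
      rw [e1θ, e1x]
      exact hG1'
    rcases eq_or_lt_of_le hcon with heq | hlt
    · rw [heq, e2θ, e2x] at hE
      linarith [hG2']
    · have hC := contG hp0 hp1 hu₁0 hlt hv₂0 hsum2 (le_of_lt hE)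
      rw [e2θ, e2x] at hC
      linarith [hG2']
  · -- claim: v₁ < v₂
    by_contra hcon
    push_neg at hcon
    have huu : u₂ < u₁ := by rw [hu₁, hu₂]; rw [hv₁, hv₂] at hcon; linarith
    rcases eq_or_lt_of_le hcon with heq | hlt
    · have h0 : Gf p ((v₁ - u₂)/2) ((v₁ + u₂)/2) = 0 := by
        rw [← heq, e2θ, e2x]
        exact hG2'
      have hC := contG hp0 hp1 hu₂0 huu hv₁0 hsum1 (le_of_eq h0)
      rw [e1θ, e1x] at hC
      linarith [hG1']
    · have hE : Gf p ((v₁ - u₂)/2) ((v₁ + u₂)/2) < 0 := by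
        apply vMono hp0 hu₂0 hu₂2π hv₂0 hlt hv₁2π
        rw [e2θ, e2x]
        exact hG2'
      have hC := contG hp0 hp1 hu₂0 huu hv₁0 hsum1 (le_of_lt hE)
      rw [e1θ, e1x] at hC
      linarith [hG1']

theorem stmt8 (p : ℝ) (hp : p ∈ Set.Ioc (0 : ℝ) 1) (Φ : ℝ → ℝ)
    (hΦ : ∀ θ ∈ Set.Icc (-(Real.pi / 2)) (Real.pi / 2),
      Φ θ ∈ Set.Ioo |θ| Real.pi ∧
      p * (Real.cos (Φ θ) - Real.cos θ) + (Φ θ - θ) * Real.sin (Φ θ) = 0) :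
    (∀ θ ∈ Set.Icc (-(Real.pi / 2)) (Real.pi / 2),
      Φ θ + θ ∈ Set.Ico (0 : ℝ) (3 * Real.pi / 2) ∧
      Φ θ - θ ∈ Set.Ico (0 : ℝ) (3 * Real.pi / 2) ∧
      -Φ (-θ) + θ ∈ Set.Ioc (-(3 * Real.pi / 2)) 0 ∧
      -Φ (-θ) - θ ∈ Set.Ioc (-(3 * Real.pi / 2)) 0) ∧
    StrictAntiOn (fun θ => Φ θ - θ) (Set.Icc (-(Real.pi / 2)) (Real.pi / 2)) ∧
    StrictAntiOn (fun θ => -Φ (-θ) - θ) (Set.Icc (-(Real.pi / 2)) (Real.pi / 2)) ∧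
    StrictMonoOn (fun θ => Φ θ + θ) (Set.Icc (-(Real.pi / 2)) (Real.pi / 2)) ∧
    StrictMonoOn (fun θ => -Φ (-θ) + θ) (Set.Icc (-(Real.pi / 2)) (Real.pi / 2)) := by
  obtain ⟨hp0, hp1⟩ := hp
  have hneg : ∀ θ : ℝ, θ ∈ Set.Icc (-(π / 2)) (π / 2) → -θ ∈ Set.Icc (-(π / 2)) (π / 2) := by
    intro θ hθ
    exact ⟨by linarith [hθ.2], by linarith [hθ.1]⟩
  refine ⟨?_, ?_, ?_, ?_, ?_⟩
  · intro θ hθ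
    obtain ⟨⟨ha, hb⟩, -⟩ := hΦ θ hθ
    obtain ⟨⟨ha', hb'⟩, -⟩ := hΦ (-θ) (hneg θ hθ)
    obtain ⟨haa, hab⟩ := abs_lt.1 ha
    rw [abs_neg] at ha'
    obtain ⟨haa', hab'⟩ := abs_lt.1 ha'
    obtain ⟨hθl, hθr⟩ := hθ
    refine ⟨⟨by linarith, by linarith⟩, ⟨by linarith, by linarith⟩,
      ⟨by linarith, by linarith⟩, ⟨by linarith, by linarith⟩⟩
  · intro θ₁ h1 θ₂ h2 h12
    exact (keyA hp0 hp1 hΦ h1 h2 h12).1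
  · intro θ₁ h1 θ₂ h2 h12
    have := (keyA hp0 hp1 hΦ (hneg θ₂ h2) (hneg θ₁ h1) (by linarith)).1
    simp only
    linarith
  · intro θ₁ h1 θ₂ h2 h12
    exact (keyA hp0 hp1 hΦ h1 h2 h12).2
  · intro θ₁ h1 θ₂ h2 h12
    have := (keyA hp0 hp1 hΦ (hneg θ₂ h2) (hneg θ₁ h1) (by linarith)).2
    simp only
    linarith
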